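/- arXiv:2307.00667 — 2 statements merged into one kernel-verified Lean document; each statement's English description precedes it below -/
import Mathlib

section
/- Let K : ℝ × ℝ → ℝ be a function with values in (0, 1], twice differentiable in its first argument, satisfying K(a, a) = 1 and (∂K/∂z₁)(a, a) = 0 for a fixed a ∈ ℝ. Let φ : ℝ^d → ℝ be twice differentiable and set V(x) = −log K(φ(x), a). Then at every point x ∈ ℝ^d with φ(x) = a, the Hessian of V is the rank-one symmetric bilinear form ∇²V(x)(u, v) = −(∂²K/∂z₁²)(a, a) · ⟨∇φ(x), u⟩ · ⟨∇φ(x), v⟩ for all u, v ∈ ℝ^d. -/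
open RealInnerProductSpace

/-- For `K : ℝ × ℝ → ℝ` with values in `(0,1]`, twice differentiable in its first
argument, with `K(a,a) = 1` and `(∂K/∂z₁)(a,a) = 0`, and for a twice differentiable
`φ : ℝ^d → ℝ`, the Hessian of `V(x) = -log K(φ(x), a)` at any point `x` with `φ(x) = a` is
the rank-one bilinear form
`∇²V(x)(u,v) = -(∂²K/∂z₁²)(a,a) ⬝ ⟪∇φ(x), u⟫ ⬝ ⟪∇φ(x), v⟫`. -/
theorem morse_negLog_hessian_on_modes (d : ℕ)
    (K : ℝ → ℝ → ℝ) (a : ℝ)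
    (hK_Ioc : ∀ z₁ z₂, K z₁ z₂ ∈ Set.Ioc (0 : ℝ) 1)
    (hK_diff : Differentiable ℝ (fun z => K z a))
    (hK_diff2 : Differentiable ℝ (deriv (fun z => K z a)))
    (hKaa : K a a = 1)
    (hK'aa : deriv (fun z => K z a) a = 0)
    (φ : EuclideanSpace ℝ (Fin d) → ℝ)
    (hφ : Differentiable ℝ φ)
    (hφ2 : Differentiable ℝ (fderiv ℝ φ))
    (V : EuclideanSpace ℝ (Fin d) → ℝ)
    (hV : ∀ x, V x = -Real.log (K (φ x) a)) :
    ∀ x, φ x = a →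
      ∀ u v : EuclideanSpace ℝ (Fin d),
        fderiv ℝ (fderiv ℝ V) x u v
          = -(deriv (deriv (fun z => K z a)) a) * (⟪gradient φ x, u⟫ * ⟪gradient φ x, v⟫) := by
  set g : ℝ → ℝ := fun z => K z a with hg
  have gpos : ∀ z, 0 < g z := fun z => (hK_Ioc z a).1
  set ψ : ℝ → ℝ := fun z => -(deriv g z / g z) with hψ
  -- derivative of ψ
  have hψd : ∀ z, HasDerivAt ψ
      (-((deriv (deriv g) z * g z - deriv g z * deriv g z) / (g z)^2)) z := by
    intro z
    exact (((hK_diff2 z).hasDerivAt.div (hK_diff z).hasDerivAt (gpos z).ne')).neg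
  -- fderiv of V everywhere
  have hVd : ∀ y, HasFDerivAt V (ψ (φ y) • fderiv ℝ φ y) y := by
    intro y
    have hlog : HasDerivAt (fun z => -Real.log (g z)) (ψ (φ y)) (φ y) :=
      ((hK_diff (φ y)).hasDerivAt.log (gpos (φ y)).ne').neg
    have := hlog.comp_hasFDerivAt y (hφ y).hasFDerivAt
    have hVeq : V = fun y => -Real.log (g (φ y)) := funext hV
    rw [hVeq]
    exact this
  have hfV : fderiv ℝ V = fun y => ψ (φ y) • fderiv ℝ φ y :=
    funext fun y => (hVd y).fderiv
  intro x hx u v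
  -- derivative of the scalar coefficient at x
  have hc : HasFDerivAt (fun y => ψ (φ y))
      ((-((deriv (deriv g) (φ x) * g (φ x) - deriv g (φ x) * deriv g (φ x)) / (g (φ x))^2))
        • fderiv ℝ φ x) x :=
    (hψd (φ x)).comp_hasFDerivAt x (hφ x).hasFDerivAt
  have hD : HasFDerivAt (fderiv ℝ φ) (fderiv ℝ (fderiv ℝ φ) x) x := (hφ2 x).hasFDerivAt
  have hF := hc.smul hD
  rw [hfV]
  rw [show fderiv ℝ (fun y => ψ (φ y) • fderiv ℝ φ y) x = _ from hF.fderiv]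
  have hga : g a = 1 := hKaa
  have hg'a : deriv g a = 0 := hK'aa
  have hψa : ψ (φ x) = 0 := by rw [hx, hψ]; simp [hg'a]
  have hcoef : -((deriv (deriv g) (φ x) * g (φ x) - deriv g (φ x) * deriv g (φ x)) / (g (φ x))^2)
      = -(deriv (deriv g) a) := by rw [hx, hga, hg'a]; ring
  have hinner : ∀ w : EuclideanSpace ℝ (Fin d), ⟪gradient φ x, w⟫ = fderiv ℝ φ x w := by
    intro w
    simp [gradient, InnerProductSpace.toDual_symm_apply]
  rw [hinner u, hinner v]
  simp [hψa, hcoef, ContinuousLinearMap.smulRight_apply, ContinuousLinearMap.add_apply,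
    ContinuousLinearMap.smul_apply]
  ring
end

section
/- Let K : ℝ × ℝ → ℝ be a function with values in (0, 1], twice differentiable in its first argument, satisfying K(a, a) = 1, (∂K/∂z₁)(a, a) = 0, and (∂²K/∂z₁²)(a, a) < 0 for a fixed a ∈ ℝ. Let φ : ℝ^d → ℝ be twice differentiable and set V(x) = −log K(φ(x), a). Then at every point x ∈ ℝ^d with φ(x) = a, a vector v ∈ ℝ^d satisfies ∇²V(x)(v, u) = 0 for all u ∈ ℝ^d if and only if ⟨∇φ(x), v⟩ = 0; that is, the null space of the Hessian of V at x is exactly the orthogonal complement of the span of ∇φ(x) (the tangent space to the level set {φ = a} at x whenever ∇φ(x) ≠ 0). In particular V satisfies the Morse–Bott non-degeneracy condition on the mode set M_a = {x : φ(x) = a}. -/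
open RealInnerProductSpace

/-- Under the hypotheses of Statement 4 together with
`(∂²K/∂z₁²)(a,a) < 0`, at every point `x` with `φ(x) = a` the null space of the Hessian of
`V(x) = -log K(φ(x), a)` is exactly the orthogonal complement of `∇φ(x)`: a vector `v`
satisfies `∇²V(x)(v,u) = 0` for all `u` iff `⟪∇φ(x), v⟫ = 0`.  This is the Morse–Bott
non-degeneracy condition for `V` on the mode set `M_a = {x : φ(x) = a}`. -/
theorem morse_negLog_morseBott (d : ℕ)
    (K : ℝ → ℝ → ℝ) (a : ℝ)
    (hK_Ioc : ∀ z₁ z₂, K z₁ z₂ ∈ Set.Ioc (0 : ℝ) 1)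
    (hK_diff : Differentiable ℝ (fun z => K z a))
    (hK_diff2 : Differentiable ℝ (deriv (fun z => K z a)))
    (hKaa : K a a = 1)
    (hK'aa : deriv (fun z => K z a) a = 0)
    (hK''aa : deriv (deriv (fun z => K z a)) a < 0)
    (φ : EuclideanSpace ℝ (Fin d) → ℝ)
    (hφ : Differentiable ℝ φ)
    (hφ2 : Differentiable ℝ (fderiv ℝ φ))
    (V : EuclideanSpace ℝ (Fin d) → ℝ)
    (hV : ∀ x, V x = -Real.log (K (φ x) a)) :
    ∀ x, φ x = a →
      ∀ v : EuclideanSpace ℝ (Fin d),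
        (∀ u : EuclideanSpace ℝ (Fin d), fderiv ℝ (fderiv ℝ V) x v u = 0)
          ↔ ⟪gradient φ x, v⟫ = 0 := by
  intro x hx v
  set k : ℝ → ℝ := fun z => K z a with hk
  have hkpos : ∀ z, 0 < k z := fun z => (hK_Ioc z a).1
  set g : ℝ → ℝ := fun z => -Real.log (k z) with hgdef
  have hVg : V = fun y => g (φ y) := funext fun y => hV y
  have hka : k a = 1 := hKaa
  have hk'a : deriv k a = 0 := hK'aa
  -- first derivative of g
  have hgd : ∀ z, HasDerivAt g (-(deriv k z / k z)) z := fun z =>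
    (((hK_diff z).hasDerivAt).log (hkpos z).ne').neg
  have gdiff : Differentiable ℝ g := fun z => (hgd z).differentiableAt
  have hg' : deriv g = fun z => -(deriv k z / k z) := funext fun z => (hgd z).deriv
  -- second derivative of g at a
  have h2 : HasDerivAt (deriv g) (-(deriv (deriv k) a)) a := by
    rw [hg']
    have hd : HasDerivAt (deriv k) (deriv (deriv k) a) a := (hK_diff2 a).hasDerivAt
    have hh : HasDerivAt k (deriv k a) a := (hK_diff a).hasDerivAt
    have := (hd.div hh (hkpos a).ne').neg
    refine this.congr_deriv ?_
    simp [hka, hk'a]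
  -- first fderiv of V
  have hVd : ∀ y, HasFDerivAt V (deriv g (φ y) • fderiv ℝ φ y) y := by
    intro y
    rw [hVg]
    exact ((gdiff (φ y)).hasDerivAt).comp_hasFDerivAt y (hφ y).hasFDerivAt
  have hfV : fderiv ℝ V = fun y => deriv g (φ y) • fderiv ℝ φ y :=
    funext fun y => (hVd y).fderiv
  -- second fderiv of V at x
  have h2' : HasDerivAt (deriv g) (-(deriv (deriv k) a)) (φ x) := by rw [hx]; exact h2
  have hc : HasFDerivAt (fun y => deriv g (φ y)) ((-(deriv (deriv k) a)) • fderiv ℝ φ x) x :=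
    h2'.comp_hasFDerivAt x (hφ x).hasFDerivAt
  have hsm : HasFDerivAt (fun y => deriv g (φ y) • fderiv ℝ φ y)
      (deriv g (φ x) • fderiv ℝ (fderiv ℝ φ) x
        + ((-(deriv (deriv k) a)) • fderiv ℝ φ x).smulRight (fderiv ℝ φ x)) x :=
    hc.smul (hφ2 x).hasFDerivAt
  have hzero : deriv g (φ x) = 0 := by rw [hx, hg']; simp [hk'a, hka]
  have hHess : fderiv ℝ (fderiv ℝ V) x
      = ((-(deriv (deriv k) a)) • fderiv ℝ φ x).smulRight (fderiv ℝ φ x) := by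
    rw [hfV, hsm.fderiv, hzero]
    simp
  have hHessapp : ∀ u w : EuclideanSpace ℝ (Fin d),
      fderiv ℝ (fderiv ℝ V) x u w
        = (-(deriv (deriv k) a)) * (fderiv ℝ φ x u) * (fderiv ℝ φ x w) := by
    intro u w
    rw [hHess]
    simp [mul_assoc, smul_eq_mul]
  have hcpos : 0 < -(deriv (deriv k) a) := by linarith [hK''aa]
  have hgrad : ⟪gradient φ x, v⟫ = fderiv ℝ φ x v :=
    InnerProductSpace.toDual_symm_apply
  constructor
  · intro h
    have hv := h v
    rw [hHessapp] at hv
    rcases mul_eq_zero.1 hv with h' | h'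
    · rcases mul_eq_zero.1 h' with h'' | h''
      · exact absurd h'' hcpos.ne'
      · rw [hgrad, h'']
    · rw [hgrad, h']
  · intro h u
    rw [hHessapp]
    rw [hgrad] at h
    rw [h]
    ring
end
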